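/- Let n be a positive even integer and let C_α ⊆ Z4^n be the Z4-submodule generated by the all-twos vector (2,2,...,2), so C_α = {(0,...,0), (2,...,2)}. Then the Euclidean covering radius satisfies r_E(C_α) = 2n. -/

import Mathlib

/-- The Lee weight on `ZMod 4`: `w_L(0)=0, w_L(1)=1, w_L(2)=2, w_L(3)=1`. -/
def leeWt (x : ZMod 4) : ℕ := min x.val (4 - x.val)

/-- The Euclidean weight on `ZMod 4`: `w_E(0)=0, w_E(1)=1, w_E(2)=4, w_E(3)=1`. -/
def euclWt (x : ZMod 4) : ℕ := (min x.val (4 - x.val)) ^ 2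

/-- The Lee distance between two vectors over `ZMod 4`. -/
def dLee {ι : Type*} [Fintype ι] (x y : ι → ZMod 4) : ℕ := ∑ i, leeWt (x i - y i)

/-- The Euclidean distance between two vectors over `ZMod 4`. -/
def dEucl {ι : Type*} [Fintype ι] (x y : ι → ZMod 4) : ℕ := ∑ i, euclWt (x i - y i)

/-- The covering radius of a code over `ZMod 4` with respect to the Lee distance. -/
noncomputable def covRadLee {ι : Type*} [Fintype ι] (C : Set (ι → ZMod 4)) : ℕ :=
  sSup (Set.range fun u : ι → ZMod 4 => sInf (dLee u '' C))

/-- The covering radius of a code over `ZMod 4` with respect to the Euclidean distance. -/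
noncomputable def covRadEucl {ι : Type*} [Fintype ι] (C : Set (ι → ZMod 4)) : ℕ :=
  sSup (Set.range fun u : ι → ZMod 4 => sInf (dEucl u '' C))

lemma wsum : ∀ x : ZMod 4, euclWt x + euclWt (x - 2) ≤ 4 := by decide

lemma count_sum (n m a b : ℕ) (hm : m ≤ n) :
    ∑ i ∈ Finset.range n, (if i < m then a else b) = m * a + (n - m) * b := by
  rw [Finset.range_eq_Ico, ← Finset.sum_Ico_consecutive _ (Nat.zero_le m) hm]
  rw [Finset.sum_congr rfl (fun i hi => if_pos (Finset.mem_Ico.mp hi).2),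
      Finset.sum_congr rfl (g := fun _ => b) (fun i hi => if_neg (by
        have := (Finset.mem_Ico.mp hi).1; omega))]
  simp [Nat.Ico_zero_eq_range, mul_comm]

theorem stmt8 (n : ℕ) (hn : 0 < n) (hne : Even n)
    (Cα : Submodule (ZMod 4) (Fin n → ZMod 4))
    (hCα : Cα = Submodule.span (ZMod 4) {fun _ : Fin n => (2 : ZMod 4)}) :
    covRadEucl (Cα : Set (Fin n → ZMod 4)) = 2 * n := by
  have hv : ((Cα : Set (Fin n → ZMod 4))) = {0, fun _ => (2:ZMod 4)} := by
    subst hCα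
    ext x
    simp only [SetLike.mem_coe, Submodule.mem_span_singleton, Set.mem_insert_iff,
      Set.mem_singleton_iff]
    constructor
    · rintro ⟨c, rfl⟩
      have h2 : c * 2 = 0 ∨ c * 2 = 2 := by revert c; decide
      rcases h2 with h | h
      · left; funext i; simpa using h
      · right; funext i; simpa using h
    · rintro (rfl | rfl)
      · exact ⟨0, by simp⟩
      · exact ⟨1, by simp⟩
  rw [hv]
  set v : Fin n → ZMod 4 := fun _ => 2 with hvdef
  have key : ∀ u : Fin n → ZMod 4,
      sInf (dEucl u '' {0, v}) = min (dEucl u 0) (dEucl u v) := by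
    intro u
    rw [Set.image_pair, csInf_pair]
  have bound : ∀ u : Fin n → ZMod 4, min (dEucl u 0) (dEucl u v) ≤ 2 * n := by
    intro u
    have hsum : dEucl u 0 + dEucl u v ≤ 4 * n := by
      unfold dEucl
      rw [← Finset.sum_add_distrib]
      calc (∑ i, (euclWt (u i - 0) + euclWt (u i - v i)))
          ≤ ∑ _i : Fin n, 4 := Finset.sum_le_sum (fun i _ => by
            simpa using wsum (u i))
        _ = 4 * n := by simp [mul_comm]
    omega
  have hbdd : BddAbove (Set.range fun u : Fin n → ZMod 4 => sInf (dEucl u '' {0, v})) :=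
    ⟨2 * n, by rintro _ ⟨u, rfl⟩; exact le_of_eq_of_le (key u) (bound u)⟩
  apply le_antisymm
  · exact csSup_le (Set.range_nonempty _) (by rintro _ ⟨u, rfl⟩; exact le_of_eq_of_le (key u) (bound u))
  · -- witness
    obtain ⟨k, hk⟩ := hne
    have hkn : n / 2 = k := by omega
    set u0 : Fin n → ZMod 4 := fun i => if (i : ℕ) < n / 2 then 0 else 2 with hu0
    have hsum0 : dEucl u0 0 = 2 * n := by
      unfold dEucl
      simp only [Pi.zero_apply]
      have : ∀ i : Fin n, euclWt (u0 i - 0) = if (i:ℕ) < n/2 then 0 else 4 := by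
        intro i; by_cases h : (i:ℕ) < n/2 <;> simp [hu0, h, euclWt] <;> decide
      rw [Finset.sum_congr rfl (fun i _ => this i),
        Fin.sum_univ_eq_sum_range (fun i => if i < n/2 then 0 else 4),
        count_sum n (n/2) 0 4 (by omega)]
      omega
    have hsumv : dEucl u0 v = 2 * n := by
      unfold dEucl
      have : ∀ i : Fin n, euclWt (u0 i - v i) = if (i:ℕ) < n/2 then 4 else 0 := by
        intro i; by_cases h : (i:ℕ) < n/2 <;> simp [hu0, hvdef, h, euclWt] <;> decide
      rw [Finset.sum_congr rfl (fun i _ => this i),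
        Fin.sum_univ_eq_sum_range (fun i => if i < n/2 then 4 else 0),
        count_sum n (n/2) 4 0 (by omega)]
      omega
    exact le_csSup hbdd ⟨u0, by simpa [hsum0, hsumv] using key u0⟩
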